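/- Let (S,*,n) be a symmetric composition algebra over a field k with dim_k S ≥ 4 that possesses a para-unit e, and let S = ⊕_{g∈G} S_g be a grading of S by a group G. Then e belongs to the identity component S_1. -/

import Mathlib

open QuadraticMap DirectSum

theorem aux_flex {k : Type*} [Field k] {S : Type*} [AddCommGroup S] [Module k S]
    (mul : S →ₗ[k] S →ₗ[k] S) (n : QuadraticForm k S)
    (hnondeg : ∀ x : S, (∀ y : S, polar n x y = 0) → x = 0)
    (hcomp : ∀ x y : S, n (mul x y) = n x * n y)
    (hassoc : ∀ x y z : S, polar n (mul x y) z = polar n x (mul y z)) :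
    (∀ x y : S, mul (mul x y) x = n x • y) ∧
    (∀ x y : S, mul x (mul y x) = n x • y) ∧
    (∀ m x z : S, mul x (mul m z) + mul z (mul m x) = polar n x z • m) := by
  have hlinL : ∀ x y z : S, polar n (mul x y) (mul x z) = n x * polar n y z := by
    intro x y z
    have h1 : mul x y + mul x z = mul x (y + z) := (map_add (mul x) y z).symm
    simp only [QuadraticMap.polar, h1, hcomp]
    ring
  have hlinR : ∀ x y z : S, polar n (mul x z) (mul y z) = polar n x y * n z := by
    intro x y z
    have h1 : mul x z + mul y z = mul (x + y) z := by
      rw [map_add]; rfl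
    simp only [QuadraticMap.polar, h1, hcomp]
    ring
  have flexL : ∀ x y : S, mul (mul x y) x = n x • y := by
    intro x y
    have h := hnondeg (mul (mul x y) x - n x • y) ?_
    · exact sub_eq_zero.mp h
    · intro z
      rw [polar_sub_left, polar_smul_left, hassoc (mul x y) x z, hlinL x y z]
      simp [smul_eq_mul]
  have flexR : ∀ x y : S, mul x (mul y x) = n x • y := by
    intro x y
    have h := hnondeg (mul x (mul y x) - n x • y) ?_
    · exact sub_eq_zero.mp h
    · intro z
      rw [polar_sub_left, polar_smul_left,
        polar_comm _ (mul x (mul y x)) z, ← hassoc z x (mul y x), hlinR z y x,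
        polar_comm _ z y]
      simp [smul_eq_mul, mul_comm]
  refine ⟨flexL, flexR, ?_⟩
  intro m x z
  have h := flexR (x + z) m
  have hexp : mul (x + z) (mul m (x + z)) =
      mul x (mul m x) + (mul x (mul m z) + mul z (mul m x)) + mul z (mul m z) := by
    simp only [map_add, LinearMap.add_apply]
    abel
  rw [hexp, flexR x m, flexR z m] at h
  have hn : n (x + z) = polar n x z + n x + n z := by
    simp [QuadraticMap.polar]; ring
  rw [hn] at h
  rw [add_smul, add_smul] at h
  linear_combination (norm := abel) h

/-- In a group-graded symmetric composition algebra of dimension at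
least 4 possessing a para-unit `e`, the para-unit lies in the identity
component of the grading. -/
theorem paraUnit_mem_identity_component
    {k : Type*} [Field k] {S : Type*} [AddCommGroup S] [Module k S]
    (mul : S →ₗ[k] S →ₗ[k] S) (n : QuadraticForm k S)
    (hnondeg : ∀ x : S, (∀ y : S, polar n x y = 0) → x = 0)
    (hcomp : ∀ x y : S, n (mul x y) = n x * n y)
    (hassoc : ∀ x y z : S, polar n (mul x y) z = polar n x (mul y z))
    (hdim : 4 ≤ Module.finrank k S)
    (e : S)
    (hpara : ∀ x : S, mul e x = polar n e x • e - x ∧ mul x e = polar n e x • e - x)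
    {G : Type*} [Group G] [DecidableEq G]
    (A : G → Submodule k S)
    (hdecomp : DirectSum.IsInternal A)
    (hgrmul : ∀ g h : G, ∀ x ∈ A g, ∀ y ∈ A h, mul x y ∈ A (g * h)) :
    e ∈ A 1 := by
  classical
  obtain ⟨flexL, flexR, hG4⟩ := aux_flex mul n hnondeg hcomp hassoc
  set f : S → k := fun x => polar n e x with hf
  have hpara1 : ∀ x : S, mul e x = f x • e - x := fun x => (hpara x).1
  have hpara2 : ∀ x : S, mul x e = f x • e - x := fun x => (hpara x).2
  have hfadd : ∀ x y : S, f (x + y) = f x + f y := fun x y => polar_add_right n e x y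
  have hfsmul : ∀ (c : k) (x : S), f (c • x) = c * f x := fun c x => by
    show polar n e (c • x) = c * polar n e x
    rw [polar_smul_right]; simp [smul_eq_mul]
  have hf0 : f (0 : S) = 0 := by
    show polar n e 0 = 0; exact polar_zero_right n e
  have hfsub : ∀ x y : S, f (x - y) = f x - f y := fun x y => polar_sub_right n e x y
  have hfneg : ∀ x : S, f (-x) = - f x := fun x => by
    have := hfsub 0 x; rw [zero_sub, hf0] at this; simpa using this
  -- projections
  obtain ⟨π, hπmem, hπhom, hπzero⟩ : ∃ π : G → (S →ₗ[k] S),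
      (∀ c x, π c x ∈ A c) ∧
      (∀ c b (y : S), y ∈ A b → π c y = if c = b then y else 0) ∧
      (∀ x : S, (∀ c, π c x = 0) → x = 0) := by
    let dec : S ≃ₗ[k] ⨁ c, A c :=
      (LinearEquiv.ofBijective (DirectSum.coeLinearMap A) hdecomp).symm
    refine ⟨fun c => (A c).subtype ∘ₗ (DirectSum.component k G (fun c => A c) c) ∘ₗ dec.toLinearMap,
      ?_, ?_, ?_⟩
    · intro c x; exact ((dec x) c).2
    · intro c b y hy
      have h1 : dec y = DirectSum.of (fun c => A c) b ⟨y, hy⟩ := by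
        apply (LinearEquiv.ofBijective (DirectSum.coeLinearMap A) hdecomp).injective
        simp [dec, DirectSum.coeLinearMap_of]
        exact (DirectSum.coeLinearMap_of (R := k) A b ⟨y, hy⟩).symm
      simp only [LinearMap.coe_comp, Function.comp_apply, LinearEquiv.coe_coe]
      rw [show (DirectSum.component k G (fun c => A c) c) (dec y) = (dec y) c from rfl, h1]
      by_cases hcb : c = b
      · subst hcb; rw [DirectSum.of_eq_same]; simp
      · rw [DirectSum.of_eq_of_ne _ _ _ hcb]; simp [hcb]
    · intro x hx
      have hd : dec x = 0 := by
        refine DFinsupp.ext fun c => ?_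
        have := hx c
        simp only [LinearMap.coe_comp, Function.comp_apply, LinearEquiv.coe_coe] at this
        exact Subtype.ext this
      have := congrArg dec.symm hd
      simpa using this
  have hπE : ∀ c d : G, π c (π d e) = if c = d then π d e else 0 :=
    fun c d => hπhom c d _ (hπmem d e)
  have hcoef : ∀ (c : k) (v : S), v ≠ 0 → c • v = 0 → c = 0 := by
    intro c v hv h
    rcases smul_eq_zero.mp h with h | h
    · exact h
    · exact absurd h hv
  -- induction principle
  have hind : ∀ (p : S → Prop), (∀ b (y : S), y ∈ A b → p y) → p 0 →
      (∀ x y : S, p x → p y → p (x + y)) → ∀ x : S, p x := by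
    intro p hp h0 hadd x
    have hx : x ∈ (⊤ : Submodule k S) := trivial
    rw [← hdecomp.submodule_iSup_eq_top] at hx
    exact Submodule.iSup_induction A (motive := p) hx hp h0 hadd
  -- projections of products
  have hPMl : ∀ (h c : G) (x z : S), x ∈ A h → π c (mul z x) = mul (π (c * h⁻¹) z) x := by
    intro h c x z hx
    refine hind (fun z => π c (mul z x) = mul (π (c * h⁻¹) z) x) ?_ (by simp) ?_ z
    · intro a z hz
      rw [hπhom c (a * h) _ (hgrmul a h z hz x hx), hπhom (c * h⁻¹) a z hz]
      by_cases hca : c = a * h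
      · rw [if_pos hca, if_pos (by rw [hca]; group)]
      · rw [if_neg hca, if_neg (fun hh => hca (by rw [← hh]; group)), map_zero,
          LinearMap.zero_apply]
    · intro x' y' h1 h2
      simp only [map_add, LinearMap.add_apply, h1, h2]
  have hPMr : ∀ (a c : G) (x z : S), x ∈ A a → π c (mul x z) = mul x (π (a⁻¹ * c) z) := by
    intro a c x z hx
    refine hind (fun z => π c (mul x z) = mul x (π (a⁻¹ * c) z)) ?_ (by simp) ?_ z
    · intro b z hz
      rw [hπhom c (a * b) _ (hgrmul a b x hx z hz), hπhom (a⁻¹ * c) b z hz]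
      by_cases hca : c = a * b
      · rw [if_pos hca, if_pos (by rw [hca]; group)]
      · rw [if_neg hca, if_neg (fun hh => hca (by rw [← hh]; group)), map_zero]
    · intro x' y' h1 h2
      simp only [map_add, h1, h2]
  -- product rules with components of e
  have hPRl : ∀ (a h : G) (x : S), x ∈ A h →
      mul (π a e) x = f x • π (a * h) e - (if a = 1 then x else 0) := by
    intro a h x hx
    have h1 := hPMl h (a * h) x e hx
    rw [show a * h * h⁻¹ = a by group] at h1
    rw [← h1, hpara1 x, _root_.map_sub, LinearMap.map_smul, hπhom (a * h) h x hx]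
    congr 1
    by_cases ha : a = 1
    · rw [if_pos ha, if_pos (by rw [ha, one_mul])]
    · rw [if_neg ha, if_neg (fun hh => ha (mul_eq_right.mp hh))]
  have hPRr : ∀ (a h : G) (x : S), x ∈ A h →
      mul x (π a e) = f x • π (h * a) e - (if a = 1 then x else 0) := by
    intro a h x hx
    have h1 := hPMr h (h * a) x e hx
    rw [show h⁻¹ * (h * a) = a by group] at h1
    rw [← h1, hpara2 x, _root_.map_sub, LinearMap.map_smul, hπhom (h * a) h x hx]
    congr 1
    by_cases ha : a = 1
    · rw [if_pos ha, if_pos (by rw [ha, mul_one])]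
    · rw [if_neg ha, if_neg (fun hh => ha (mul_eq_left.mp hh))]
  -- the key bilinear identity
  have hKEY : ∀ w : G, w ≠ 1 → ∀ (a b : G) (x y : S), x ∈ A a → y ∈ A b →
      polar n x y • π w e = (f x * f y) • (π (a * w * b) e + π (b * w * a) e)
        - (if w * b = 1 then f y • x else 0) - (if w * a = 1 then f x • y else 0) := by
    intro w hw a b x y hx hy
    have h4 := hG4 (π w e) x y
    have h5 : mul (π w e) y = f y • π (w * b) e := by
      rw [hPRl w b y hy, if_neg hw, sub_zero]
    have h6 : mul (π w e) x = f x • π (w * a) e := by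
      rw [hPRl w a x hx, if_neg hw, sub_zero]
    have h7 := hPRr (w * b) a x hx
    have h8 := hPRr (w * a) b y hy
    rw [h5, h6, LinearMap.map_smul, LinearMap.map_smul, h7, h8,
      show a * (w * b) = a * w * b by group, show b * (w * a) = b * w * a by group] at h4
    rw [← h4]
    split_ifs <;> module
  -- polar in terms of f
  have hE : ∀ x y : S, polar n x y = f x * f y - f (mul x y) := by
    intro x y
    have h1 : f (mul x y) = polar n (mul x y) e := polar_comm _ _ _
    rw [hassoc x y e, hpara2 y, polar_sub_right, polar_smul_right] at h1
    have h2 : polar n x e = f x := polar_comm _ _ _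
    rw [h2] at h1
    have : polar n x y = f x * f y - f (mul x y) := by
      rw [h1]; simp [smul_eq_mul]; ring
    exact this
  -- Case B : the inverse component carries no f
  have hcaseB : ∀ w : G, w ≠ 1 → π w e ≠ 0 → (∀ y ∈ A w⁻¹, f y = 0) → False := by
    intro w hw hEw hB
    have hbinv : ∀ b : G, w * b = 1 → b = w⁻¹ := by
      intro b hb
      rw [← one_mul b, ← inv_mul_cancel w, mul_assoc, hb, mul_one]
    have hW : ∀ (c : G) (z : S), z ∈ A c → f z = 0 → z = 0 := by
      intro c z hz hfz
      apply hnondeg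
      refine hind (fun y => polar n z y = 0) ?_ (polar_zero_right n z)
        (fun x y h1 h2 => by
          show polar n z (x + y) = 0
          rw [polar_add_right]
          try simp only at h1 h2
          rw [h1, h2, add_zero])
      intro b y hy
      have hk := hKEY w hw c b z y hz hy
      rw [hfz] at hk
      have hz2 : (if w * b = 1 then f y • z else 0) = 0 := by
        split_ifs with hwb
        · rw [hB y (by rwa [hbinv b hwb] at hy), zero_smul]
        · rfl
      rw [hz2] at hk
      simp only [zero_mul, zero_smul, mul_zero, sub_zero, zero_sub, sub_zero] at hk
      -- hk : polar n z y • π w e = 0  (approximately)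
      exact hcoef _ _ hEw (by rw [hk]; simp)
    have hAinv : ∀ y ∈ A w⁻¹, y = 0 := fun y hy => hW w⁻¹ y hy (hB y hy)
    have hw2 : w * w ≠ 1 := by
      intro h2
      exact hEw (hAinv (π w e) (by rw [← hbinv w h2]; exact hπmem w e))
    have hkey2 : ∀ (b : G) (y : S), y ∈ A b → polar n (π w e) y = 0 := by
      intro b y hy
      by_cases hwb : w * b = 1
      · rw [hAinv y (by rwa [hbinv b hwb] at hy), polar_zero_right]
      · have hk := hKEY w hw w b (π w e) y (hπmem w e) hy
        rw [if_neg hwb, if_neg hw2, sub_zero, sub_zero] at hk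
        have hne1 : w ≠ w * w * b := fun hh =>
          hwb (mul_left_cancel (a := w) (by rw [mul_one, ← mul_assoc]; exact hh.symm))
        have hne2 : w ≠ b * w * w := fun hh => hwb (by
          have hbw : b * w = 1 := mul_right_cancel (b := w) (by rw [one_mul]; exact hh.symm)
          have hb : b = w⁻¹ := eq_inv_of_mul_eq_one_left hbw
          rw [hb]; group)
        have hp := congrArg (π w) hk
        rw [LinearMap.map_smul, LinearMap.map_smul, map_add, hπE w w, if_pos rfl,
          hπE w (w * w * b), if_neg hne1, hπE w (b * w * w), if_neg hne2,
          add_zero, smul_zero] at hp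
        exact hcoef _ _ hEw hp
    refine hEw (hnondeg _ ?_)
    refine hind (fun y => polar n (π w e) y = 0) hkey2 (polar_zero_right n _)
      (fun x y h1 h2 => by
        show polar n (π w e) (x + y) = 0
        rw [polar_add_right]
        try simp only at h1 h2
        rw [h1, h2, add_zero])
  -- the fundamental relation C0
  have hC0 : ∀ w : G, w ≠ 1 → ∀ u : S, u ∈ A w⁻¹ → f u = 1 → ∀ (b : G) (y : S), y ∈ A b →
      polar n u y • π w e + y = (2 * f y) • π b e - (if w * b = 1 then f y • u else 0) := by
    intro w hw u hu huf b y hy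
    have hk := hKEY w hw w⁻¹ b u y hu hy
    rw [show w⁻¹ * w * b = b by group, show b * w * w⁻¹ = b by group,
      if_pos (show w * w⁻¹ = 1 by group), huf] at hk
    split_ifs at hk ⊢ with hwb
    · linear_combination (norm := module) hk
    · linear_combination (norm := module) hk
  -- find a witness component of e outside the identity
  by_contra hcon
  have hgex : ∃ g : G, g ≠ 1 ∧ π g e ≠ 0 := by
    by_contra hno
    push_neg at hno
    apply hcon
    have he1 : e = π 1 e := by
      have hz : ∀ c : G, π c (e - π 1 e) = 0 := by
        intro c
        rw [_root_.map_sub, hπE c 1]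
        by_cases hc : c = 1
        · rw [if_pos hc, hc, sub_self]
        · rw [if_neg hc, hno c hc, zero_sub, neg_eq_zero]
      have := hπzero _ hz
      rw [sub_eq_zero] at this
      exact this
    rw [he1]
    exact hπmem 1 e
  obtain ⟨g, hg1, hge⟩ := hgex
  -- case split on existence of non-isotropic element in A g⁻¹
  by_cases hCex : ∃ u ∈ A g⁻¹, f u ≠ 0
  swap
  · push_neg at hCex
    exact absurd (hcaseB g hg1 hge hCex) not_false
  obtain ⟨u₀, hu₀A, hu₀f⟩ := hCex
  have huA : (f u₀)⁻¹ • u₀ ∈ A g⁻¹ := Submodule.smul_mem _ _ hu₀A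
  have hufone : f ((f u₀)⁻¹ • u₀) = 1 := by rw [hfsmul, inv_mul_cancel₀ hu₀f]
  set u : S := (f u₀)⁻¹ • u₀ with hu
  by_cases hcg0 : f (π g e) = 0
  · -- Case C1
    have h1 := hC0 g hg1 u huA hufone g (π g e) (hπmem g e)
    rw [hcg0] at h1
    have h1' : (polar n u (π g e) + 1) • π g e = 0 := by
      split_ifs at h1 with hgg
      · linear_combination (norm := module) h1
      · linear_combination (norm := module) h1
    have hpm1 : polar n u (π g e) = -1 := by
      have h2 := hcoef _ _ hge h1'
      linear_combination h2
    have h2 : mul (π g e) u = π 1 e := by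
      have h := hPRl g g⁻¹ u huA
      rw [hufone, if_neg hg1, sub_zero, show g * g⁻¹ = 1 by group, one_smul] at h
      exact h
    have h3 : polar n (π g e) u = - f (π 1 e) := by
      rw [hE (π g e) u, h2, hcg0, zero_mul, zero_sub]
    have hc1 : f (π 1 e) = 1 := by
      have hcc := polar_comm (⇑n) u (π g e)
      rw [hpm1, h3] at hcc
      linear_combination hcc
    have h4 := hC0 g hg1 u huA hufone 1 (π 1 e) (hπmem 1 e)
    rw [hc1, if_neg (show ¬ g * 1 = 1 by rw [mul_one]; exact hg1)] at h4
    have h5 := congrArg (π 1) h4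
    rw [map_add, LinearMap.map_smul, _root_.map_sub, LinearMap.map_smul,
      hπE 1 g, if_neg (fun hh => hg1 hh.symm), hπE 1 1, if_pos rfl,
      map_zero, smul_zero, zero_add] at h5
    have hE10 : π 1 e ≠ 0 := fun h => by rw [h, hf0] at hc1; exact zero_ne_one hc1
    have h6 : (2 * 1 - 1 : k) • π 1 e = 0 := by
      linear_combination (norm := module) -h5
    have h7 := hcoef _ _ hE10 h6
    exact absurd (by linear_combination h7 : (1:k) = 0) one_ne_zero
  · -- Case C2 : f (π g e) ≠ 0
    have hpself : ∀ x : S, polar n x x = n x + n x := fun x => by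
      rw [polar_self]; exact two_smul ℕ (n x)
    have hline : ∀ (c : G) (z : S), z ∈ A c → f z = 0 → z = 0 := by
      intro c z hz hfz
      have h1 := hC0 g hg1 u huA hufone c z hz
      rw [hfz] at h1
      have h1' : z = (-(polar n u z)) • π g e := by
        split_ifs at h1 <;> linear_combination (norm := module) h1
      have h2 := congrArg f h1'
      rw [hfz, hfsmul] at h2
      rcases mul_eq_zero.mp h2.symm with h3 | h3
      · rw [h1', h3, zero_smul]
      · exact absurd h3 hcg0
    -- find a homogeneous component outside {1, g, g⁻¹}
    have hbex : ∃ b : G, b ≠ 1 ∧ b ≠ g ∧ b ≠ g⁻¹ ∧ ∃ yb : S, yb ∈ A b ∧ yb ≠ 0 := by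
      by_contra hnob
      push_neg at hnob
      obtain ⟨F, hF⟩ : ∃ F : S →ₗ[k] k, ∀ x, F x = f x :=
        ⟨{ toFun := f, map_add' := hfadd,
           map_smul' := fun c x => by simpa using hfsmul c x }, fun x => rfl⟩
      have hinjF : ∀ c : G, Function.Injective (F.domRestrict (A c)) := by
        intro c z w hzw
        simp only [LinearMap.domRestrict_apply, hF] at hzw
        have hsub : ((z : S) - (w : S)) = 0 :=
          hline c _ (sub_mem z.2 w.2) (by rw [hfsub, hzw, sub_self])
        exact Subtype.ext (by rw [← sub_eq_zero]; exact hsub)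
      have hfd : ∀ c : G, FiniteDimensional k (A c) :=
        fun c => FiniteDimensional.of_injective (F.domRestrict (A c)) (hinjF c)
      have hrk : ∀ c : G, Module.finrank k (A c) ≤ 1 := by
        intro c
        have := LinearMap.finrank_le_finrank_of_injective (hinjF c)
        rwa [Module.finrank_self] at this
      have htop2 : (⊤ : Submodule k S) = A 1 ⊔ A g ⊔ A g⁻¹ := by
        refine le_antisymm ?_ le_top
        intro x _
        refine hind (fun x => x ∈ A 1 ⊔ A g ⊔ A g⁻¹) ?_ (zero_mem _)
          (fun a b ha hb => ?_) x
        · intro c y hy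
          by_cases h1 : c = 1
          · exact Submodule.mem_sup_left (Submodule.mem_sup_left (h1 ▸ hy))
          by_cases h2 : c = g
          · exact Submodule.mem_sup_left (Submodule.mem_sup_right (h2 ▸ hy))
          by_cases h3 : c = g⁻¹
          · exact Submodule.mem_sup_right (h3 ▸ hy)
          · have := hnob c h1 h2 h3 y hy
            rw [this]; exact zero_mem _
        · exact add_mem ha hb
      have hrank3 : Module.finrank k S ≤ 3 := by
        haveI := hfd 1; haveI := hfd g; haveI := hfd g⁻¹
        have b1 : Module.finrank k ↥(A 1 ⊔ A g) ≤ 2 := by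
          have h := Submodule.finrank_sup_add_finrank_inf_eq (A 1) (A g)
          have := hrk 1; have := hrk g
          omega
        have b2 : Module.finrank k ↥(A 1 ⊔ A g ⊔ A g⁻¹) ≤ 3 := by
          have h := Submodule.finrank_sup_add_finrank_inf_eq (A 1 ⊔ A g) (A g⁻¹)
          have := hrk g⁻¹
          omega
        have e1 : Module.finrank k S = Module.finrank k ↥(A 1 ⊔ A g ⊔ A g⁻¹) := by
          rw [← htop2]
          exact (finrank_top k S).symm
        omega
      omega
    obtain ⟨b, hb1, hbg, hbgi, yb, hybA, hyb0⟩ := hbex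
    have hfyb : f yb ≠ 0 := fun h => hyb0 (hline b yb hybA h)
    have hgb1 : g * b ≠ 1 := fun h => hbgi (eq_inv_of_mul_eq_one_right h)
    have h1 := hC0 g hg1 u huA hufone b yb hybA
    rw [if_neg hgb1, sub_zero] at h1
    have hybe : yb = (2 * f yb) • π b e := by
      have h2 := congrArg (π b) h1
      rw [map_add, LinearMap.map_smul, hπE b g, if_neg hbg, smul_zero, zero_add,
        hπhom b b yb hybA, if_pos rfl, LinearMap.map_smul, hπE b b, if_pos rfl] at h2
      exact h2
    have hEb0 : π b e ≠ 0 := fun h => hyb0 (by rw [hybe, h, smul_zero])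
    have hcb : 2 * f (π b e) = 1 := by
      have h3 := congrArg f hybe
      rw [hfsmul] at h3
      exact mul_left_cancel₀ hfyb (by linear_combination -h3)
    have h2ne : (2 : k) ≠ 0 := fun h => by
      rw [h, zero_mul] at hcb; exact zero_ne_one hcb
    -- witness b must have a non-isotropic inverse component
    by_cases hCb : ∃ u' ∈ A b⁻¹, f u' ≠ 0
    swap
    · push_neg at hCb
      exact hcaseB b hb1 hEb0 hCb
    obtain ⟨v₀, hv₀A, hv₀f⟩ := hCb
    have hvA : (f v₀)⁻¹ • v₀ ∈ A b⁻¹ := Submodule.smul_mem _ _ hv₀A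
    have hvfone : f ((f v₀)⁻¹ • v₀) = 1 := by rw [hfsmul, inv_mul_cancel₀ hv₀f]
    set v : S := (f v₀)⁻¹ • v₀ with hv
    have hbginv : b * g⁻¹ ≠ 1 := fun h => hbg (eq_of_mul_inv_eq_one h)
    have halpha : u = (2 : k) • π g⁻¹ e := by
      have h3 := hC0 b hb1 v hvA hvfone g⁻¹ u huA
      rw [hufone, if_neg hbginv, sub_zero, mul_one] at h3
      have h4 := congrArg (π g⁻¹) h3
      rw [map_add, LinearMap.map_smul, hπE g⁻¹ b, if_neg (fun hh => hbgi hh.symm),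
        smul_zero, zero_add, hπhom g⁻¹ g⁻¹ u huA, if_pos rfl, LinearMap.map_smul,
        hπE g⁻¹ g⁻¹, if_pos rfl] at h4
      exact h4
    have hbeta : polar n u u • π g e = -u := by
      have h3 := hC0 g hg1 u huA hufone g⁻¹ u huA
      rw [hufone, if_pos (show g * g⁻¹ = 1 by group), one_smul, mul_one, ← halpha] at h3
      linear_combination (norm := module) h3
    by_cases hg2 : g * g = 1
    swap
    · -- g² ≠ 1
      have hggi : g⁻¹ ≠ g := fun h => hg2 (inv_eq_iff_mul_eq_one.mp h)
      have h4 := congrArg (π g⁻¹) hbeta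
      rw [LinearMap.map_smul, hπE g⁻¹ g, if_neg hggi, smul_zero, _root_.map_neg,
        hπhom g⁻¹ g⁻¹ u huA, if_pos rfl] at h4
      have hu0 : u = 0 := by linear_combination (norm := module) h4
      rw [hu0, hf0] at hufone
      exact zero_ne_one hufone
    · -- g² = 1
      have hginv : g⁻¹ = g := inv_eq_iff_mul_eq_one.mpr hg2
      have hu2 : u = (2 : k) • π g e := by rw [halpha, hginv]
      have hgbinv : g * b⁻¹ ≠ 1 := fun h => hbg (eq_of_mul_inv_eq_one h).symm
      have hbig : b⁻¹ ≠ g := fun h => hbgi (by rw [← h, inv_inv])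
      have heps : v = (2 : k) • π b⁻¹ e := by
        have h3 := hC0 g hg1 u huA hufone b⁻¹ v hvA
        rw [hvfone, if_neg hgbinv, sub_zero, mul_one] at h3
        have h4 := congrArg (π b⁻¹) h3
        rw [map_add, LinearMap.map_smul, hπE b⁻¹ g, if_neg hbig, smul_zero, zero_add,
          hπhom b⁻¹ b⁻¹ v hvA, if_pos rfl, LinearMap.map_smul,
          hπE b⁻¹ b⁻¹, if_pos rfl] at h4
        exact h4
      have hzeta : polar n v v • π b e = -v := by
        have h3 := hC0 b hb1 v hvA hvfone b⁻¹ v hvA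
        rw [hvfone, if_pos (show b * b⁻¹ = 1 by group), one_smul, mul_one, ← heps] at h3
        linear_combination (norm := module) h3
      by_cases hb2 : b * b = 1
      swap
      · have hbbi : b⁻¹ ≠ b := fun h => hb2 (inv_eq_iff_mul_eq_one.mp h)
        have h4 := congrArg (π b⁻¹) hzeta
        rw [LinearMap.map_smul, hπE b⁻¹ b, if_neg hbbi, smul_zero, _root_.map_neg,
          hπhom b⁻¹ b⁻¹ v hvA, if_pos rfl] at h4
        have hv0 : v = 0 := by linear_combination (norm := module) h4
        rw [hv0, hf0] at hvfone
        exact zero_ne_one hvfone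
      · have hbinv : b⁻¹ = b := inv_eq_iff_mul_eq_one.mpr hb2
        have hv2 : v = (2 : k) • π b e := by rw [heps, hbinv]
        have hpvv : polar n v v = -2 := by
          have h4 : (polar n v v + 2) • π b e = 0 := by
            have h4' : polar n v v • π b e = -((2 : k) • π b e) := by
              rw [← hv2]; exact hzeta
            linear_combination (norm := module) h4'
          have h5 := hcoef _ _ hEb0 h4
          linear_combination h5
        have hnEb : 4 * n (π b e) = -1 := by
          have h5 : n v = (2 * 2 : k) • n (π b e) := by
            rw [hv2]; exact QuadraticMap.map_smul n (2 : k) (π b e)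
          rw [smul_eq_mul] at h5
          have h6 : n v + n v = -2 := by rw [← hpself]; exact hpvv
          have h7 : n v = -1 := mul_left_cancel₀ h2ne (by linear_combination h6)
          rw [h7] at h5
          linear_combination -h5
        have hiota := hKEY g hg1 b b (π b e) (π b e) (hπmem b e) (hπmem b e)
        rw [if_neg hgb1, sub_zero, sub_zero] at hiota
        by_cases hbgb : b * g * b = g
        · rw [hbgb] at hiota
          have h7 : (n (π b e) + n (π b e) - 2 * (f (π b e) * f (π b e))) • π g e = 0 := by
            rw [hpself] at hiota
            linear_combination (norm := module) hiota
          have h8 := hcoef _ _ hge h7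
          exact h2ne (by linear_combination (-2) * h8 + hnEb + (-(2 * (f (π b e))) - 1) * hcb)
        · have h4 := congrArg (π g) hiota
          rw [LinearMap.map_smul, LinearMap.map_smul, hπE g g, if_pos rfl, map_add,
            hπE g (b * g * b), if_neg (fun hh => hbgb hh.symm), add_zero, smul_zero] at h4
          have h8 := hcoef _ _ hge h4
          rw [hpself] at h8
          exact one_ne_zero (α := k) (by linear_combination hnEb - 2 * h8)
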